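/- The deformation matrices U_K defined by ∂ψ_n/∂u_K = ∑_m (U_K)_{nm} ψ_m are antisymmetric and given by U_K = -(1/(2K))((Q^K)_+ - (Q^K)_-). -/

import Mathlib

open Polynomial

/-- Entry of the `K`-th power of a banded (tridiagonal) semi-infinite matrix. -/
noncomputable def matPow (Q : ℕ → ℕ → ℂ) : ℕ → ℕ → ℕ → ℂ
  | 0 => fun n m => if n = m then 1 else 0
  | K + 1 => fun n m => ∑ k ∈ Finset.range (n + K + 2), matPow Q K n k * Q k m

/-- Apply a linear functional to a scalar multiple of a function. -/
private lemma I_smul (I : (ℂ → ℂ) →ₗ[ℂ] ℂ) (c : ℂ) (f g : ℂ → ℂ)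
    (h : ∀ x, g x = c * f x) : I g = c * I f := by
  have hg : g = c • f := funext fun x => by simpa [smul_eq_mul] using h x
  rw [hg, map_smul, smul_eq_mul]

private lemma I_congr (I : (ℂ → ℂ) →ₗ[ℂ] ℂ) (f g : ℂ → ℂ)
    (h : ∀ x, g x = f x) : I g = I f := by
  have hg : g = f := funext h
  rw [hg]

private lemma I_sum (I : (ℂ → ℂ) →ₗ[ℂ] ℂ) (F : Finset ℕ) (c : ℕ → ℂ)
    (f : ℕ → ℂ → ℂ) (g : ℂ → ℂ) (h : ∀ x, g x = ∑ k ∈ F, c k * f k x) :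
    I g = ∑ k ∈ F, c k * I (f k) := by
  have hg : g = ∑ k ∈ F, c k • f k := by
    funext x
    simpa [Finset.sum_apply, smul_eq_mul] using h x
  rw [hg, map_sum]
  exact Finset.sum_congr rfl fun k _ => by rw [map_smul, smul_eq_mul]

/-- Expansion of a polynomial in a monic graded family. -/
private lemma expand_monic (p : ℕ → Polynomial ℂ)
    (hmon : ∀ n, (p n).Monic) (hdeg : ∀ n, (p n).natDegree = n) :
    ∀ d (q : Polynomial ℂ), q.natDegree ≤ d →
      ∃ c : ℕ → ℂ, q = ∑ k ∈ Finset.range (d + 1), C (c k) * p k := by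
  intro d
  induction d with
  | zero =>
    intro q hq
    refine ⟨fun _ => q.coeff 0, ?_⟩
    have h1 : p 0 = 1 := (hmon 0).natDegree_eq_zero.mp (hdeg 0)
    rw [Finset.sum_range_one, h1, mul_one, ← eq_C_of_natDegree_le_zero hq]
  | succ d ih =>
    intro q hq
    set a := q.coeff (d + 1) with ha
    have hsub : (q - C a * p (d + 1)).natDegree ≤ d := by
      rw [natDegree_le_iff_coeff_eq_zero]
      intro N hN
      rcases eq_or_lt_of_le (Nat.succ_le_of_lt hN) with hNe | hNlt
      · have hcoe : (p (d + 1)).coeff (d + 1) = 1 := by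
          have := (hmon (d + 1)).coeff_natDegree
          rwa [hdeg (d + 1)] at this
        rw [← hNe, coeff_sub, coeff_C_mul, hcoe, mul_one, ← ha, sub_self]
      · have h1 : q.coeff N = 0 :=
          coeff_eq_zero_of_natDegree_lt (lt_of_le_of_lt hq hNlt)
        have h2 : (p (d + 1)).coeff N = 0 :=
          coeff_eq_zero_of_natDegree_lt (by rw [hdeg]; exact hNlt)
        rw [coeff_sub, h1, coeff_C_mul, h2, mul_zero, sub_zero]
    obtain ⟨c, hc⟩ := ih _ hsub
    refine ⟨fun k => if k = d + 1 then a else c k, ?_⟩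
    have hsum : ∑ k ∈ Finset.range (d + 2),
        C (if k = d + 1 then a else c k) * p k
        = (∑ k ∈ Finset.range (d + 1), C (c k) * p k) + C a * p (d + 1) := by
      rw [Finset.sum_range_succ, if_pos rfl]
      congr 1
      refine Finset.sum_congr rfl fun k hk => ?_
      rw [if_neg (by have := Finset.mem_range.mp hk; omega)]
    simp only [hsum, ← hc]
    ring



/-- The pairing `G q m = I (eval q · e^{-W/2} · ψ_m)`. -/
private noncomputable def Gf (I : (ℂ → ℂ) →ₗ[ℂ] ℂ) (W : Polynomial ℂ)
    (ψ0 : ℕ → ℂ → ℂ) (q : Polynomial ℂ) (m : ℕ) : ℂ :=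
  I (fun x => eval x q * Complex.exp (-(eval x W) / 2) * ψ0 m x)

private lemma Gf_sum (I : (ℂ → ℂ) →ₗ[ℂ] ℂ) (W : Polynomial ℂ)
    (ψ0 : ℕ → ℂ → ℂ) (q : Polynomial ℂ) (F : Finset ℕ) (c : ℕ → ℂ)
    (f : ℕ → Polynomial ℂ) (hq : q = ∑ j ∈ F, C (c j) * f j) (m : ℕ) :
    Gf I W ψ0 q m = ∑ j ∈ F, c j * Gf I W ψ0 (f j) m := by
  apply I_sum I F c (fun j => fun x => eval x (f j) * Complex.exp (-(eval x W) / 2) * ψ0 m x)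
  intro x
  rw [hq]
  simp only [eval_finset_sum, eval_mul, eval_C, Finset.sum_mul]
  exact Finset.sum_congr rfl fun k _ => by ring

private lemma Gf_orth (I : (ℂ → ℂ) →ₗ[ℂ] ℂ) (W : Polynomial ℂ)
    (p0 : ℕ → Polynomial ℂ) (s0 : ℕ → ℂ) (hs0 : ∀ n, s0 n ≠ 0)
    (ψ0 : ℕ → ℂ → ℂ)
    (hψ0 : ∀ n x, ψ0 n x = eval x (p0 n) * Complex.exp (-(eval x W) / 2) / s0 n)
    (horth0 : ∀ n m, I (fun x => ψ0 n x * ψ0 m x) = if n = m then 1 else 0)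
    (k m : ℕ) :
    Gf I W ψ0 (p0 k) m = s0 k * (if k = m then 1 else 0) := by
  have h1 : Gf I W ψ0 (p0 k) m = s0 k * I (fun x => ψ0 k x * ψ0 m x) := by
    apply I_smul
    intro x
    rw [hψ0 k x]
    field_simp [hs0 k]
  rw [h1, horth0]

private lemma Gf_vanish (I : (ℂ → ℂ) →ₗ[ℂ] ℂ) (W : Polynomial ℂ)
    (p0 : ℕ → Polynomial ℂ) (hmon : ∀ n, (p0 n).Monic)
    (hdeg : ∀ n, (p0 n).natDegree = n)
    (s0 : ℕ → ℂ) (hs0 : ∀ n, s0 n ≠ 0)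
    (ψ0 : ℕ → ℂ → ℂ)
    (hψ0 : ∀ n x, ψ0 n x = eval x (p0 n) * Complex.exp (-(eval x W) / 2) / s0 n)
    (horth0 : ∀ n m, I (fun x => ψ0 n x * ψ0 m x) = if n = m then 1 else 0)
    (d : ℕ) (q : Polynomial ℂ) (hq : q.natDegree ≤ d) (m : ℕ) (hm : d < m) :
    Gf I W ψ0 q m = 0 := by
  obtain ⟨c, hc⟩ := expand_monic p0 hmon hdeg d q hq
  rw [Gf_sum I W ψ0 q _ c p0 hc m]
  refine Finset.sum_eq_zero fun k hk => ?_
  rw [Gf_orth I W p0 s0 hs0 ψ0 hψ0 horth0 k m,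
    if_neg (by have := Finset.mem_range.mp hk; omega)]
  ring

private lemma Gf_X (I : (ℂ → ℂ) →ₗ[ℂ] ℂ) (W : Polynomial ℂ)
    (p0 : ℕ → Polynomial ℂ) (s0 : ℕ → ℂ) (hs0 : ∀ n, s0 n ≠ 0)
    (ψ0 : ℕ → ℂ → ℂ)
    (hψ0 : ∀ n x, ψ0 n x = eval x (p0 n) * Complex.exp (-(eval x W) / 2) / s0 n)
    (Q : ℕ → ℕ → ℂ)
    (hQ0 : ∀ n m, Q n m = I (fun x => x * ψ0 n x * ψ0 m x)) (j m : ℕ) :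
    Gf I W ψ0 (X * p0 j) m = s0 j * Q j m := by
  rw [hQ0 j m]
  apply I_smul
  intro x
  rw [eval_mul, eval_X, hψ0 j x]
  field_simp [hs0 j]

private lemma Gf_pow (I : (ℂ → ℂ) →ₗ[ℂ] ℂ) (W : Polynomial ℂ)
    (p0 : ℕ → Polynomial ℂ) (hmon : ∀ n, (p0 n).Monic)
    (hdeg : ∀ n, (p0 n).natDegree = n)
    (s0 : ℕ → ℂ) (hs0 : ∀ n, s0 n ≠ 0)
    (ψ0 : ℕ → ℂ → ℂ)
    (hψ0 : ∀ n x, ψ0 n x = eval x (p0 n) * Complex.exp (-(eval x W) / 2) / s0 n)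
    (horth0 : ∀ n m, I (fun x => ψ0 n x * ψ0 m x) = if n = m then 1 else 0)
    (Q : ℕ → ℕ → ℂ)
    (hQ0 : ∀ n m, Q n m = I (fun x => x * ψ0 n x * ψ0 m x)) :
    ∀ (J n m : ℕ), Gf I W ψ0 (X ^ J * p0 n) m = s0 n * matPow Q J n m := by
  intro J
  induction J with
  | zero =>
    intro n m
    rw [pow_zero, one_mul, Gf_orth I W p0 s0 hs0 ψ0 hψ0 horth0 n m]
    rfl
  | succ J ih =>
    intro n m
    have hdegXp : (X ^ J * p0 n).natDegree ≤ n + J := by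
      rw [(monic_X_pow J).natDegree_mul (hmon n), natDegree_X_pow, hdeg n]
      omega
    obtain ⟨c, hc⟩ := expand_monic p0 hmon hdeg (n + J) (X ^ J * p0 n) hdegXp
    have hck : ∀ k, k ∈ Finset.range (n + J + 1) →
        c k * s0 k = s0 n * matPow Q J n k := by
      intro k hk
      have h1 := Gf_sum I W ψ0 (X ^ J * p0 n) _ c p0 hc k
      rw [ih n k] at h1
      have h2 : ∑ j ∈ Finset.range (n + J + 1), c j * Gf I W ψ0 (p0 j) k
          = c k * s0 k := by
        rw [Finset.sum_eq_single k]
        · rw [Gf_orth I W p0 s0 hs0 ψ0 hψ0 horth0 k k, if_pos rfl, mul_one]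
        · intro j _ hj
          rw [Gf_orth I W p0 s0 hs0 ψ0 hψ0 horth0 j k, if_neg hj]
          ring
        · intro hkk; exact absurd hk hkk
      rw [h2] at h1
      exact h1.symm
    have hvan : matPow Q J n (n + J + 1) = 0 := by
      have h1 := ih n (n + J + 1)
      rw [Gf_vanish I W p0 hmon hdeg s0 hs0 ψ0 hψ0 horth0 (n + J)
        (X ^ J * p0 n) hdegXp (n + J + 1) (by omega)] at h1
      exact (mul_eq_zero.mp h1.symm).resolve_left (hs0 n)
    have hXc : X ^ (J + 1) * p0 n
        = ∑ j ∈ Finset.range (n + J + 1), C (c j) * (X * p0 j) := by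
      rw [pow_succ', mul_assoc, hc, Finset.mul_sum]
      exact Finset.sum_congr rfl fun j _ => by ring
    rw [Gf_sum I W ψ0 _ _ c (fun j => X * p0 j) hXc m]
    have hterm : ∀ j ∈ Finset.range (n + J + 1),
        c j * Gf I W ψ0 (X * p0 j) m = s0 n * (matPow Q J n j * Q j m) := by
      intro j hj
      rw [Gf_X I W p0 s0 hs0 ψ0 hψ0 Q hQ0 j m, ← mul_assoc, hck j hj]
      ring
    rw [Finset.sum_congr rfl hterm, ← Finset.mul_sum]
    have hlast : ∑ k ∈ Finset.range (n + J + 2), matPow Q J n k * Q k m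
        = ∑ k ∈ Finset.range (n + J + 1), matPow Q J n k * Q k m := by
      rw [Finset.sum_range_succ, hvan, zero_mul, add_zero]
    show _ = s0 n * ∑ k ∈ Finset.range (n + J + 2), matPow Q J n k * Q k m
    rw [hlast]

theorem stmt14 (K : ℕ) (hK : 1 ≤ K)
    (I : (ℂ → ℂ) →ₗ[ℂ] ℂ) (t₀ : ℂ)
    (V₀ : Polynomial ℂ) (V : ℂ → Polynomial ℂ)
    (hVdef : ∀ t, V t = V₀ + C (t / K) * X ^ K)
    (p : ℂ → ℕ → Polynomial ℂ)
    (hp : ∀ t n, (p t n).Monic ∧ (p t n).natDegree = n)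
    (hpdiff : ∀ n j, DifferentiableAt ℂ (fun t => (p t n).coeff j) t₀)
    (s : ℂ → ℕ → ℂ) (hs : ∀ t n, s t n ≠ 0)
    (hsdiff : ∀ n, DifferentiableAt ℂ (fun t => s t n) t₀)
    (ψ : ℂ → ℕ → ℂ → ℂ)
    (hψ : ∀ t n x, ψ t n x =
      eval x (p t n) * Complex.exp (-(eval x (V t)) / 2) / s t n)
    (horth : ∀ t n m, I (fun x => ψ t n x * ψ t m x) = if n = m then 1 else 0)
    (hder : ∀ n m, HasDerivAt (fun t => I (fun x => ψ t n x * ψ t m x))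
      (I (fun x => deriv (fun t => ψ t n x) t₀ * ψ t₀ m x
            + ψ t₀ n x * deriv (fun t => ψ t m x) t₀)) t₀)
    (Q : ℕ → ℕ → ℂ) (hQ : ∀ n m, Q n m = I (fun x => x * ψ t₀ n x * ψ t₀ m x))
    (U : ℕ → ℕ → ℂ)
    (hU : ∀ n m, U n m = I (fun x => deriv (fun t => ψ t n x) t₀ * ψ t₀ m x)) :
    (∀ n m, U n m = -U m n) ∧
      ∀ n m, U n m = -(1 / (2 * K)) *
        ((if n < m then matPow Q K n m else 0) -
          (if m < n then matPow Q K n m else 0)) := by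
  have hK0 : (K : ℂ) ≠ 0 := by
    have : 0 < K := hK
    exact_mod_cast this.ne'
  have hmon : ∀ n, (p t₀ n).Monic := fun n => (hp t₀ n).1
  have hdeg : ∀ n, (p t₀ n).natDegree = n := fun n => (hp t₀ n).2
  have hψ0 : ∀ n x, ψ t₀ n x
      = eval x (p t₀ n) * Complex.exp (-(eval x (V t₀)) / 2) / s t₀ n :=
    fun n x => hψ t₀ n x
  have horth0 : ∀ n m, I (fun x => ψ t₀ n x * ψ t₀ m x)
      = if n = m then 1 else 0 := fun n m => horth t₀ n m
  -- moments of powers of x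
  have hMP : ∀ (J n m : ℕ),
      I (fun x => x ^ J * ψ t₀ n x * ψ t₀ m x) = matPow Q J n m := by
    intro J n m
    have h1 : I (fun x => eval x (X ^ J * p t₀ n)
          * Complex.exp (-(eval x (V t₀)) / 2) * ψ t₀ m x)
        = s t₀ n * I (fun x => x ^ J * ψ t₀ n x * ψ t₀ m x) := by
      apply I_smul
      intro x
      rw [eval_mul, eval_pow, eval_X, hψ0 n x]
      field_simp [hs t₀ n]
    have h2 := Gf_pow I (V t₀) (p t₀) hmon hdeg (s t₀) (hs t₀) (ψ t₀) hψ0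
      horth0 Q hQ J n m
    rw [Gf] at h2
    rw [h2] at h1
    exact (mul_left_cancel₀ (hs t₀ n) h1.symm)
  -- symmetry of the moments
  have hsym : ∀ (J n m : ℕ), matPow Q J n m = matPow Q J m n := by
    intro J n m
    rw [← hMP J n m, ← hMP J m n]
    exact I_congr I _ _ fun x => by ring
  -- antisymmetry
  have hanti : ∀ n m, U n m + U m n = 0 := by
    intro n m
    have h1 := hder n m
    have h2 : (fun t => I (fun x => ψ t n x * ψ t m x))
        = fun _ : ℂ => (if n = m then (1 : ℂ) else 0) :=
      funext fun t => horth t n m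
    rw [h2] at h1
    have h3 : I (fun x => deriv (fun t => ψ t n x) t₀ * ψ t₀ m x
          + ψ t₀ n x * deriv (fun t => ψ t m x) t₀) = 0 :=
      h1.unique (hasDerivAt_const t₀ _)
    rw [hU n m, hU m n, ← map_add]
    rw [← h3]
    exact I_congr I _ _ fun x => by
      simp only [Pi.add_apply]
      ring
  -- derivative decomposition
  have hD : ∀ n, ∃ r : Polynomial ℂ, r.natDegree ≤ n ∧ ∀ x,
      deriv (fun t => ψ t n x) t₀
        = -(1 / (2 * K)) * (x ^ K * ψ t₀ n x)
          + eval x r * Complex.exp (-(eval x (V t₀)) / 2) := by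
    intro n
    refine ⟨C (s t₀ n)⁻¹ * (∑ j ∈ Finset.range (n + 1),
        C (deriv (fun t => (p t n).coeff j) t₀) * X ^ j)
        - C (deriv (fun t => s t n) t₀ / (s t₀ n) ^ 2) * p t₀ n, ?_, ?_⟩
    · refine (natDegree_sub_le _ _).trans (max_le ?_ ?_)
      · refine (natDegree_C_mul_le _ _).trans
          (natDegree_sum_le_of_forall_le _ _ fun j hj => ?_)
        refine (natDegree_C_mul_le _ _).trans ?_
        rw [natDegree_X_pow]
        exact Nat.lt_succ_iff.mp (Finset.mem_range.mp hj)
      · exact (natDegree_C_mul_le _ _).trans (le_of_eq (hdeg n))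
    · intro x
      have hfun : (fun t => ψ t n x) = fun t =>
          (∑ j ∈ Finset.range (n + 1), (p t n).coeff j * x ^ j)
            * Complex.exp (-(eval x V₀ + t / K * x ^ K) / 2) / s t n := by
        funext t
        rw [hψ t n x]
        have he : eval x (p t n)
            = ∑ j ∈ Finset.range (n + 1), (p t n).coeff j * x ^ j := by
          have := eval_eq_sum_range (p := p t n) x
          rwa [(hp t n).2] at this
        have hv : eval x (V t) = eval x V₀ + t / K * x ^ K := by
          rw [hVdef t]
          simp
        rw [he, hv]
      have hP : HasDerivAt
          (fun t => ∑ j ∈ Finset.range (n + 1), (p t n).coeff j * x ^ j)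
          (∑ j ∈ Finset.range (n + 1),
            deriv (fun t => (p t n).coeff j) t₀ * x ^ j) t₀ :=
        HasDerivAt.fun_sum fun j _ => (hpdiff n j).hasDerivAt.mul_const (x ^ j)
      have hE : HasDerivAt
          (fun t : ℂ => Complex.exp (-(eval x V₀ + t / K * x ^ K) / 2))
          (Complex.exp (-(eval x V₀ + t₀ / K * x ^ K) / 2) * (-(x ^ K / K) / 2))
          t₀ := by
        have hinner : HasDerivAt
            (fun t : ℂ => -(eval x V₀ + t / K * x ^ K) / 2)
            (-(x ^ K / K) / 2) t₀ := by
          have h1 : HasDerivAt (fun t : ℂ => t / K * x ^ K)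
              (1 / K * x ^ K) t₀ :=
            ((hasDerivAt_id t₀).div_const _).mul_const _
          have h2 := ((h1.const_add (eval x V₀)).neg).div_const 2
          exact h2.congr_deriv (by ring)
        exact hinner.cexp
      have hSd : HasDerivAt (fun t => s t n) (deriv (fun t => s t n) t₀) t₀ :=
        (hsdiff n).hasDerivAt
      have htot := (hP.fun_mul hE).fun_div hSd (hs t₀ n)
      have hder2 : HasDerivAt (fun t => ψ t n x) _ t₀ := htot.congr_of_eventuallyEq (Filter.Eventually.of_forall fun t => congrFun hfun t)
      rw [hder2.deriv]
      have hv0 : eval x (V t₀) = eval x V₀ + t₀ / K * x ^ K := by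
        rw [hVdef t₀]
        simp
      have he0 : eval x (p t₀ n)
          = ∑ j ∈ Finset.range (n + 1), (p t₀ n).coeff j * x ^ j := by
        have := eval_eq_sum_range (p := p t₀ n) x
        rwa [hdeg n] at this
      rw [hψ0 n x, hv0, eval_sub, eval_mul, eval_mul, eval_C, eval_C,
        eval_finset_sum]
      simp only [eval_mul, eval_C, eval_pow, eval_X]
      rw [he0]
      have hKc : (2 : ℂ) * K ≠ 0 := by
        simp [hK0]
      field_simp [hs t₀ n]
      ring
  choose r hrdeg hrval using hD
  -- upper-triangular formula
  have hUform : ∀ n m, n < m → U n m = -(1 / (2 * K)) * matPow Q K n m := by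
    intro n m hnm
    rw [hU n m]
    have hsplit : I (fun x => deriv (fun t => ψ t n x) t₀ * ψ t₀ m x)
        = I ((-(1 / (2 * (K : ℂ)))) • (fun x => x ^ K * ψ t₀ n x * ψ t₀ m x)
            + fun x => eval x (r n) * Complex.exp (-(eval x (V t₀)) / 2)
              * ψ t₀ m x) := by
      refine (I_congr I _ _ fun x => ?_).symm
      rw [hrval n x]
      simp only [Pi.add_apply, Pi.smul_apply, smul_eq_mul]
      ring
    rw [hsplit, map_add, map_smul, smul_eq_mul, hMP K n m]
    have hz : I (fun x => eval x (r n) * Complex.exp (-(eval x (V t₀)) / 2)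
        * ψ t₀ m x) = 0 :=
      Gf_vanish I (V t₀) (p t₀) hmon hdeg (s t₀) (hs t₀) (ψ t₀) hψ0 horth0
        n (r n) (hrdeg n) m hnm
    rw [hz, add_zero]
  constructor
  · intro n m
    linear_combination hanti n m
  · intro n m
    rcases lt_trichotomy n m with h | h | h
    · rw [if_pos h, if_neg (by omega), hUform n m h]
      ring
    · subst h
      rw [if_neg (lt_irrefl n)]
      linear_combination (hanti n n) / 2
    · rw [if_neg (by omega), if_pos h]
      have h1 : U m n = -(1 / (2 * K)) * matPow Q K m n := hUform m n h
      have h2 : matPow Q K m n = matPow Q K n m := hsym K m n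
      linear_combination hanti n m - h1 + (1 / (2 * (K:ℂ))) * h2
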